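/- If q satisfies the committor system, then p̄ is a stochastic matrix on V⁻ ∪ {0}: for every y ∈ V⁻ one has p̄(x|y) ≥ 0 for all x ∈ V⁻ ∪ {0} and Σ_{x∈V⁻∪{0}} p̄(x|y) = 1. -/

import Mathlib

open Classical

-- `pbar p q A y x` is the transition probability `p̄(x|y)` of the nonreactive chain on
-- `V⁻ ∪ {0}`: the virtual node `0` is encoded as `none`, and a node `x ∈ V⁻` as `some x`.
-- Here `p y x` is the probability `p(x|y)` of jumping from `y` to `x`.
noncomputable def pbar {V : Type*} [Fintype V] [DecidableEq V]
    (p : V → V → ℝ) (q : V → ℝ) (A : Finset V) : V → Option V → ℝ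
  | y, some x => p y x * (1 - q x) / (1 - q y)
  | y, none => if y ∈ A then ∑ z, p y z * q z else 0

/-- If `q` satisfies the committor system, then `p̄` is a stochastic matrix
on `V⁻ ∪ {0}`: for every `y ∈ V⁻` one has `p̄(x|y) ≥ 0` for all `x ∈ V⁻ ∪ {0}`, and
`Σ_{x ∈ V⁻ ∪ {0}} p̄(x|y) = 1` (the sum being `p̄(0|y) + Σ_{x ∈ V⁻} p̄(x|y)`),
where `V⁻ = {x ∈ V : q x < 1}`. -/
theorem pbar_isStochastic {V : Type*} [Fintype V] [DecidableEq V]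
    (p : V → V → ℝ) (q : V → ℝ) (A B : Finset V)
    (hAB : Disjoint A B) (hA : A.Nonempty) (hB : B.Nonempty)
    (hp0 : ∀ x y, 0 ≤ p x y) (hp1 : ∀ x, ∑ y, p x y = 1)
    (hq0 : ∀ x, 0 ≤ q x) (hq1 : ∀ x, q x ≤ 1)
    (hqA : ∀ x ∈ A, q x = 0) (hqB : ∀ x ∈ B, q x = 1)
    (hqE : ∀ x, x ∉ A ∪ B → q x = ∑ y, p x y * q y) :
    ∀ y, q y < 1 →
      (0 ≤ pbar p q A y none) ∧
      (∀ x, q x < 1 → 0 ≤ pbar p q A y (some x)) ∧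
      pbar p q A y none
        + ∑ x ∈ Finset.univ.filter (fun x => q x < 1), pbar p q A y (some x) = 1 := by
  intro y hy
  have hne : (1 : ℝ) - q y ≠ 0 := by linarith
  have hsum : ∑ x ∈ Finset.univ.filter (fun x => q x < 1), pbar p q A y (some x)
      = (∑ x, p y x * (1 - q x)) / (1 - q y) := by
    rw [Finset.sum_div]
    rw [← Finset.sum_filter_add_sum_filter_not Finset.univ (fun x => q x < 1)
      (fun x => p y x * (1 - q x) / (1 - q y))]
    have : ∑ x ∈ Finset.univ.filter (fun x => ¬ q x < 1),
        p y x * (1 - q x) / (1 - q y) = 0 := by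
      apply Finset.sum_eq_zero
      intro x hx
      simp only [Finset.mem_filter, not_lt] at hx
      have : q x = 1 := le_antisymm (hq1 x) hx.2
      simp [this]
    simp only [not_lt] at this
    simp [this, pbar]
  have hkey : ∑ x, p y x * (1 - q x) = 1 - ∑ x, p y x * q x := by
    simp [mul_sub, Finset.sum_sub_distrib, hp1 y]
  refine ⟨?_, ?_, ?_⟩
  · by_cases h : y ∈ A
    · simp only [pbar, h, if_true]
      exact Finset.sum_nonneg fun x _ => mul_nonneg (hp0 y x) (hq0 x)
    · simp [pbar, h]
  · intro x hx
    exact div_nonneg (mul_nonneg (hp0 y x) (by linarith [hq1 x])) (by linarith)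
  · rw [hsum, hkey]
    by_cases h : y ∈ A
    · have hqy : q y = 0 := hqA y h
      simp only [pbar, h, if_true]
      field_simp [hqy]
      rw [hqy]; ring
    · have hyB : y ∉ B := fun hB' => absurd (hqB y hB') (ne_of_lt hy)
      have := hqE y (by simp [h, hyB])
      simp only [pbar, h, if_false]
      rw [← this]
      field_simp
      norm_num
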